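/- Fix a prime p. Let R ⊆ S be a finite extension of commutative rings of characteristic p, and let T : S → R be an R-linear map such that the map σ : S → Hom_R(S,R), σ(s)(x) := T(s·x), is bijective. Then for every e ≥ 1 and every φ ∈ C_{e,R} there exists a unique φ^⊤ ∈ C_{e,S} satisfying T(φ^⊤(s)·s') = φ(T(s·s'^{p^e})) for all s, s' ∈ S. Moreover this φ^⊤ satisfies T(φ^⊤(s)) = φ(T(s)) for all s ∈ S, and such a φ^⊤ is already unique (if it exists) under the weaker assumption that σ is merely injective. -/

import Mathlib

/-- `p^e`-semilinear additive maps ("Cartier maps"):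
`φ (a^{p^e} • x) = a • φ x`. -/
def IsCartierMap (p : ℕ) (A : Type*) [CommSemiring A] {X Y : Type*} [AddCommMonoid X]
    [AddCommMonoid Y] [Module A X] [Module A Y] (e : ℕ) (φ : X →+ Y) : Prop :=
  ∀ (a : A) (x : X), φ (a ^ p ^ e • x) = a • φ x

/-- The `S`-linear map `σ : S → Hom_R(S,R)`, `σ(s)(x) = T(s·x)`, as an `R`-bilinear map. -/
noncomputable def sigmaT (R S : Type*) [CommRing R] [CommRing S] [Algebra R S]
    (T : S →ₗ[R] R) : S →ₗ[R] (S →ₗ[R] R) :=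
  LinearMap.mk₂ R (fun s x => T (s * x))
    (fun s s' x => by show T ((s + s') * x) = T (s * x) + T (s' * x); rw [add_mul, map_add])
    (fun r s x => by show T ((r • s) * x) = r • T (s * x); rw [smul_mul_assoc, map_smul])
    (fun s x x' => by show T (s * (x + x')) = T (s * x) + T (s * x'); rw [mul_add, map_add])
    (fun r s x => by show T (s * (r • x)) = r • T (s * x); rw [mul_smul_comm, map_smul])

/-- `ψ` is a `T`-transpose of `φ`: `T (ψ s * s') = φ (T (s * s'^{p^e}))`. -/
def IsTranspose (p : ℕ) {R S : Type*} [CommRing R] [CommRing S] [Algebra R S]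
    (T : S →ₗ[R] R) (e : ℕ) (φ : R →+ R) (ψ : S →+ S) : Prop :=
  ∀ s s' : S, T (ψ s * s') = φ (T (s * s' ^ p ^ e))

/-- Existence and uniqueness of the `T`-transpose `φ^⊤` of a Cartier map `φ ∈ C_{e,R}`
along a finite extension `R ⊆ S`, when `σ : S → Hom_R(S,R)` is bijective; moreover
`T(φ^⊤(s)) = φ(T(s))`, and uniqueness already holds when `σ` is merely injective. -/
theorem exists_unique_transpose
    (p : ℕ) (hp : p.Prime) (R S : Type*) [CommRing R] [CommRing S]
    [CharP R p] [CharP S p] [Algebra R S] [Module.Finite R S]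
    (hinj : Function.Injective (algebraMap R S)) (T : S →ₗ[R] R)
    (e : ℕ) (he : 1 ≤ e) (φ : R →+ R) (hφ : IsCartierMap p R e φ) :
    (Function.Bijective ⇑(sigmaT R S T) →
      ((∃! ψ : S →+ S, IsCartierMap p S e ψ ∧ IsTranspose p T e φ ψ) ∧
        ∀ ψ : S →+ S, IsCartierMap p S e ψ → IsTranspose p T e φ ψ →
          ∀ s : S, T (ψ s) = φ (T s))) ∧
    (Function.Injective ⇑(sigmaT R S T) →
      ∀ ψ₁ ψ₂ : S →+ S, IsCartierMap p S e ψ₁ → IsTranspose p T e φ ψ₁ →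
        IsCartierMap p S e ψ₂ → IsTranspose p T e φ ψ₂ → ψ₁ = ψ₂) := by
  haveI := Fact.mk hp
  haveI : ExpChar S p := .prime hp
  have sig_apply : ∀ y x : S, sigmaT R S T y x = T (y * x) := fun y x => rfl
  -- uniqueness under injectivity
  have uniq : Function.Injective ⇑(sigmaT R S T) →
      ∀ ψ₁ ψ₂ : S →+ S, IsTranspose p T e φ ψ₁ → IsTranspose p T e φ ψ₂ → ψ₁ = ψ₂ := by
    intro hσ ψ₁ ψ₂ h₁ h₂
    ext s
    apply hσ
    apply LinearMap.ext
    intro x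
    rw [sig_apply, sig_apply, h₁, h₂]
  -- T(ψ s) = φ(T s) for any transpose
  have Tpsi : ∀ ψ : S →+ S, IsTranspose p T e φ ψ → ∀ s : S, T (ψ s) = φ (T s) := by
    intro ψ hψ s
    have := hψ s 1
    rwa [mul_one, one_pow, mul_one] at this
  refine ⟨?_, fun hσ ψ₁ ψ₂ _ ht₁ _ ht₂ => uniq hσ ψ₁ ψ₂ ht₁ ht₂⟩
  intro hbij
  have huniq' : ∀ y y' : S, (∀ x : S, T (y * x) = T (y' * x)) → y = y' := by
    intro y y' h
    exact hbij.injective (LinearMap.ext fun x => by rw [sig_apply, sig_apply, h])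
  -- construct the transpose
  have hg : ∀ s : S, ∃ y : S, ∀ x : S, T (y * x) = φ (T (s * x ^ p ^ e)) := by
    intro s
    set L : S →ₗ[R] R :=
      { toFun := fun x => φ (T (s * x ^ p ^ e))
        map_add' := by
          intro x y
          show φ (T (s * (x + y) ^ p ^ e)) = _
          rw [add_pow_char_pow, mul_add, map_add, map_add]
        map_smul' := by
          intro r x
          show φ (T (s * (r • x) ^ p ^ e)) = _
          rw [smul_pow, mul_smul_comm, map_smul]
          exact hφ r _ } with hL
    obtain ⟨y, hy⟩ := hbij.surjective L
    refine ⟨y, fun x => ?_⟩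
    have := congrArg (fun f : S →ₗ[R] R => f x) hy
    simpa [sig_apply, hL] using this
  choose f hf using hg
  have hadd : ∀ s t : S, f (s + t) = f s + f t := by
    intro s t
    apply huniq'
    intro x
    have h1 : T ((f s + f t) * x) = φ (T (s * x ^ p ^ e)) + φ (T (t * x ^ p ^ e)) := by
      rw [add_mul, map_add, hf, hf]
    rw [hf, h1, add_mul, map_add, map_add]
  set ψ : S →+ S := AddMonoidHom.mk' f hadd with hψdef
  have hψc : IsCartierMap p S e ψ := by
    intro a s
    apply huniq'
    intro x
    show T (f (a ^ p ^ e • s) * x) = T ((a • f s) * x)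
    rw [hf, smul_eq_mul, smul_eq_mul]
    have : a ^ p ^ e * s * x ^ p ^ e = s * (a * x) ^ p ^ e := by ring
    rw [this, ← hf]
    exact congrArg T (by ring)
  have hψt : IsTranspose p T e φ ψ := fun s s' => hf s s'
  refine ⟨⟨ψ, ⟨hψc, hψt⟩, ?_⟩, fun ψ' _ ht' => Tpsi ψ' ht'⟩
  intro ψ' ⟨_, ht'⟩
  exact uniq hbij.injective ψ' ψ ht' hψt
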